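/- Let Ω be a measurable space, let η and η' be Markov kernels from ℝ to Ω, and let 0 < a ≤ b be real numbers. Let μ_a be the uniform probability measure on [a, 2a] and μ_b the uniform probability measure on [b, 2b]. Then for every measurable set s ⊆ Ω, |(μ_a.bind η)(s) − (μ_b.bind η')(s)| ≤ (1/a)·∫_{a}^{2a} |η(λ)(s) − η'(λ)(s)| dλ + 2(b − a)/b, where μ.bind κ denotes the mixture measure s ↦ ∫ κ(λ)(s) dμ(λ). -/

import Mathlib

open MeasureTheory

/-- The uniform probability measure on `[c, 2c]` (`c > 0`): Lebesgue measure restricted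
to `[c, 2c]`, normalized by the factor `1/c`. -/
noncomputable def uniformOn (c : ℝ) : Measure ℝ :=
  (ENNReal.ofReal (1 / c)) • (volume.restrict (Set.Icc c (2 * c)))

lemma bind_toReal {Ω : Type*} [MeasurableSpace Ω] (κ : ProbabilityTheory.Kernel ℝ Ω)
    [ProbabilityTheory.IsMarkovKernel κ] (c : ℝ) (hc : 0 < c)
    (s : Set Ω) (hs : MeasurableSet s) :
    (((uniformOn c).bind (fun l => κ l)) s).toReal
      = (1 / c) * ∫ l in Set.Icc c (2 * c), ((κ l) s).toReal := by
  rw [Measure.bind_apply hs κ.measurable.aemeasurable]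
  rw [uniformOn, lintegral_smul_measure]
  rw [smul_eq_mul, ENNReal.toReal_mul, ENNReal.toReal_ofReal (by positivity)]
  congr 1
  rw [← integral_toReal ((κ.measurable_coe hs).aemeasurable)
    (ae_of_all _ fun l => measure_lt_top (κ l) s)]

lemma key_bound (a b : ℝ) (ha : 0 < a) (hab : a ≤ b) (G : ℝ → ℝ)
    (hG : Measurable G) (hG0 : ∀ x, 0 ≤ G x) (hG1 : ∀ x, G x ≤ 1) :
    |(1/a) * (∫ l in Set.Icc a (2*a), G l) - (1/b) * ∫ l in Set.Icc b (2*b), G l|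
      ≤ 2 * (b - a) / b := by
  have hb : 0 < b := lt_of_lt_of_le ha hab
  have hGi : ∀ x y : ℝ, IntervalIntegrable G volume x y := by
    intro x y
    apply IntegrableOn.intervalIntegrable
    apply Measure.integrableOn_of_bounded (M := 1) measure_Icc_lt_top.ne hG.aestronglyMeasurable
    exact ae_of_all _ fun t => by
      rw [Real.norm_eq_abs, abs_le]; exact ⟨by linarith [hG0 t], hG1 t⟩
  have hIcc : ∀ x y : ℝ, x ≤ y → ∫ l in Set.Icc x y, G l = ∫ l in x..y, G l := by
    intro x y hxy
    rw [intervalIntegral.integral_of_le hxy, integral_Icc_eq_integral_Ioc]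
  have hub : ∀ x y : ℝ, x ≤ y → ∫ l in x..y, G l ≤ y - x := by
    intro x y hxy
    calc ∫ l in x..y, G l ≤ ∫ l in x..y, (1:ℝ) :=
          intervalIntegral.integral_mono_on hxy (hGi x y) intervalIntegrable_const
            (fun t _ => hG1 t)
      _ = y - x := by simp
  have hlb : ∀ x y : ℝ, x ≤ y → 0 ≤ ∫ l in x..y, G l := fun x y hxy =>
    intervalIntegral.integral_nonneg hxy (fun t _ => hG0 t)
  rw [hIcc a (2*a) (by linarith), hIcc b (2*b) (by linarith)]
  rcases le_or_gt b (2*a) with h2 | h2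
  · have e1 : ∫ l in a..(2*a), G l = (∫ l in a..b, G l) + ∫ l in b..(2*a), G l :=
      (intervalIntegral.integral_add_adjacent_intervals (hGi a b) (hGi b (2*a))).symm
    have e2 : ∫ l in b..(2*b), G l = (∫ l in b..(2*a), G l) + ∫ l in (2*a)..(2*b), G l :=
      (intervalIntegral.integral_add_adjacent_intervals (hGi b (2*a)) (hGi (2*a) (2*b))).symm
    set I1 := ∫ l in a..b, G l with hI1
    set I2 := ∫ l in b..(2*a), G l with hI2
    set I3 := ∫ l in (2*a)..(2*b), G l with hI3
    have hI1u : I1 ≤ b - a := hub a b hab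
    have hI1l : 0 ≤ I1 := hlb a b hab
    have hI2u : I2 ≤ 2*a - b := hub b (2*a) h2
    have hI2l : 0 ≤ I2 := hlb b (2*a) h2
    have hI3u : I3 ≤ 2*b - 2*a := hub (2*a) (2*b) (by linarith)
    have hI3l : 0 ≤ I3 := hlb (2*a) (2*b) (by linarith)
    rw [e1, e2, abs_le]
    constructor
    · rw [div_mul_eq_mul_div, div_mul_eq_mul_div, div_sub_div _ _ ha.ne' hb.ne',
        neg_div', div_le_div_iff₀ hb (by positivity)]
      nlinarith [mul_nonneg (mul_nonneg (sub_nonneg.2 hab) hb.le) hI2l,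
        mul_nonneg (mul_nonneg hb.le hb.le) hI1l,
        mul_nonneg (mul_nonneg ha.le hb.le) (sub_nonneg.2 hI3u)]
    · rw [div_mul_eq_mul_div, div_mul_eq_mul_div, div_sub_div _ _ ha.ne' hb.ne',
        div_le_div_iff₀ (by positivity) hb]
      nlinarith [mul_nonneg (mul_nonneg (sub_nonneg.2 hab) hb.le) (sub_nonneg.2 hI2u),
        mul_nonneg (mul_nonneg hb.le hb.le) (sub_nonneg.2 hI1u),
        mul_nonneg (mul_nonneg ha.le hb.le) hI3l]
  · have hXu : (1/a) * ∫ l in a..(2*a), G l ≤ 1 := by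
      have h := hub a (2*a) (by linarith)
      have haa : (1/a) * a = 1 := one_div_mul_cancel ha.ne'
      nlinarith [hlb a (2*a) (by linarith : a ≤ 2*a)]
    have hXl : 0 ≤ (1/a) * ∫ l in a..(2*a), G l :=
      mul_nonneg (by positivity) (hlb a (2*a) (by linarith))
    have hYu : (1/b) * ∫ l in b..(2*b), G l ≤ 1 := by
      have h := hub b (2*b) (by linarith)
      have hbb : (1/b) * b = 1 := one_div_mul_cancel hb.ne'
      nlinarith [hlb b (2*b) (by linarith : b ≤ 2*b)]
    have hYl : 0 ≤ (1/b) * ∫ l in b..(2*b), G l :=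
      mul_nonneg (by positivity) (hlb b (2*b) (by linarith))
    have h1 : 1 ≤ 2 * (b - a) / b := by
      rw [le_div_iff₀ hb]; linarith
    rw [abs_le]
    constructor <;> linarith

/-- Let `η, η'` be Markov kernels from `ℝ` to a measurable space `Ω` and `0 < a ≤ b`.
Mixing `η` over the uniform measure on `[a, 2a]` and `η'` over the uniform measure on
`[b, 2b]`, the two resulting measures differ on every measurable set `s` by at most
`(1/a) ∫_{a}^{2a} |η(λ)(s) - η'(λ)(s)| dλ + 2 (b - a) / b`. -/
theorem mixture_kernels_close
    {Ω : Type*} [MeasurableSpace Ω]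
    (η η' : ProbabilityTheory.Kernel ℝ Ω)
    [ProbabilityTheory.IsMarkovKernel η] [ProbabilityTheory.IsMarkovKernel η']
    (a b : ℝ) (ha : 0 < a) (hab : a ≤ b)
    (s : Set Ω) (hs : MeasurableSet s) :
    |(((uniformOn a).bind (fun l => η l)) s).toReal
        - (((uniformOn b).bind (fun l => η' l)) s).toReal|
      ≤ (1 / a) * (∫ l in Set.Icc a (2 * a), |((η l) s).toReal - ((η' l) s).toReal|)
          + 2 * (b - a) / b := by
  have hb : 0 < b := lt_of_lt_of_le ha hab
  rw [bind_toReal η a ha s hs, bind_toReal η' b hb s hs]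
  set F : ℝ → ℝ := fun l => ((η l) s).toReal with hF
  set G : ℝ → ℝ := fun l => ((η' l) s).toReal with hG
  have hFm : Measurable F := (η.measurable_coe hs).ennreal_toReal
  have hGm : Measurable G := (η'.measurable_coe hs).ennreal_toReal
  have hG0 : ∀ x, 0 ≤ G x := fun x => ENNReal.toReal_nonneg
  have hG1 : ∀ x, G x ≤ 1 := fun x => by
    have := prob_le_one (μ := η' x) (s := s)
    simpa using ENNReal.toReal_mono ENNReal.one_ne_top this
  have hF1 : ∀ x, F x ≤ 1 := fun x => by
    have := prob_le_one (μ := η x) (s := s)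
    simpa using ENNReal.toReal_mono ENNReal.one_ne_top this
  have hF0 : ∀ x, 0 ≤ F x := fun x => ENNReal.toReal_nonneg
  have hint : ∀ (H : ℝ → ℝ), Measurable H → (∀ x, 0 ≤ H x) → (∀ x, H x ≤ 1) →
      IntegrableOn H (Set.Icc a (2*a)) volume := by
    intro H hH h0 h1
    apply Measure.integrableOn_of_bounded (M := 1) measure_Icc_lt_top.ne hH.aestronglyMeasurable
    exact ae_of_all _ fun t => by
      rw [Real.norm_eq_abs, abs_le]; exact ⟨by linarith [h0 t], h1 t⟩
  have hFi := hint F hFm hF0 hF1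
  have hGi := hint G hGm hG0 hG1
  have key := key_bound a b ha hab G hGm hG0 hG1
  have step1 : |(1/a) * (∫ l in Set.Icc a (2*a), F l) - (1/a) * (∫ l in Set.Icc a (2*a), G l)|
      ≤ (1/a) * ∫ l in Set.Icc a (2*a), |F l - G l| := by
    rw [← mul_sub, ← integral_sub hFi hGi, abs_mul, abs_of_pos (by positivity : (0:ℝ) < 1/a)]
    apply mul_le_mul_of_nonneg_left _ (by positivity)
    rw [← Real.norm_eq_abs]
    calc ‖∫ l in Set.Icc a (2*a), (F l - G l)‖ ≤ ∫ l in Set.Icc a (2*a), ‖F l - G l‖ :=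
          norm_integral_le_integral_norm _
      _ = ∫ l in Set.Icc a (2*a), |F l - G l| := by simp [Real.norm_eq_abs]
  have tri := abs_sub_le ((1/a) * (∫ l in Set.Icc a (2*a), F l))
    ((1/a) * (∫ l in Set.Icc a (2*a), G l)) ((1/b) * ∫ l in Set.Icc b (2*b), G l)
  have final : |(1/a) * (∫ l in Set.Icc a (2*a), F l)
        - (1/b) * ∫ l in Set.Icc b (2*b), G l|
      ≤ (1/a) * (∫ l in Set.Icc a (2*a), |F l - G l|) + 2 * (b - a) / b := by
    linarith [tri, step1, key]
  simpa [hF, hG] using final
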